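/- Let n ≥ 1 and 0 < λ ≤ Λ. Let A be a symmetric positive definite n×n real matrix with λ|ξ|² ≤ ⟨Aξ, ξ⟩ ≤ Λ|ξ|² for all ξ ∈ ℝⁿ, let S := A^{1/2}, let x₀ ∈ ℝⁿ and define T^{−1}(y) := S(y − x₀) + x₀. Let r > 0, θ ∈ (0, Λ^{−1/2}], and let u : ℝⁿ → ℝ be continuously differentiable on B_r(x₀). Then (θr)^{1−n} ∫_{B_{θr}(x₀)} |∇(u ∘ T^{−1})(y)|² dy ≤ λ^{−n/2} Λ θ^{1−n} · r^{1−n} ∫_{B_r(x₀)} |∇u(x)|² dx. -/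

import Mathlib

open MeasureTheory
open scoped RealInnerProductSpace ENNReal

/-- The square root of a positive semidefinite matrix (junk value `0` if the matrix is
not positive semidefinite). -/
noncomputable def matrixSqrt {n : ℕ} (A : Matrix (Fin n) (Fin n) ℝ) :
    Matrix (Fin n) (Fin n) ℝ :=
  @dite _ A.PosSemidef (Classical.dec _) (fun h => (h.1.eigenvectorUnitary : Matrix (Fin n) (Fin n) ℝ) *
    Matrix.diagonal ((↑) ∘ (√·) ∘ h.1.eigenvalues) *
    (star h.1.eigenvectorUnitary : Matrix (Fin n) (Fin n) ℝ)) (fun _ => 0)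

set_option maxHeartbeats 1000000 in
/-- Comparison of rescaled Dirichlet integrals under the change of
variables `T⁻¹(y) = A^{1/2}(y − x₀) + x₀`: for `θ ∈ (0, Λ^{−1/2}]`,
`(θr)^{1−n} ∫_{B_{θr}(x₀)} |∇(u∘T⁻¹)|² ≤ λ^{−n/2} Λ θ^{1−n} r^{1−n} ∫_{B_r(x₀)} |∇u|²`. -/
theorem rescaled_dirichlet_integral_change_of_variables
    (n : ℕ) (hn : 1 ≤ n) (lam Lam : ℝ) (hlam : 0 < lam) (hlamLam : lam ≤ Lam)
    (A : Matrix (Fin n) (Fin n) ℝ) (hAsymm : A.IsSymm) (hApos : A.PosDef)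
    (hAell : ∀ ξ : EuclideanSpace ℝ (Fin n),
      lam * ‖ξ‖ ^ 2 ≤ ⟪Matrix.toEuclideanLin A ξ, ξ⟫ ∧
      ⟪Matrix.toEuclideanLin A ξ, ξ⟫ ≤ Lam * ‖ξ‖ ^ 2)
    (x₀ : EuclideanSpace ℝ (Fin n)) (r θ : ℝ) (hr : 0 < r)
    (hθ : θ ∈ Set.Ioc (0 : ℝ) (Real.sqrt Lam)⁻¹)
    (u : EuclideanSpace ℝ (Fin n) → ℝ)
    (hu : ContDiffOn ℝ 1 u (Metric.ball x₀ r)) :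
    ENNReal.ofReal ((θ * r) ^ ((1 : ℝ) - n)) *
        ∫⁻ y in Metric.ball x₀ (θ * r),
          (‖gradient (fun z => u (Matrix.toEuclideanLin (matrixSqrt A) (z - x₀) + x₀)) y‖₊ :
            ℝ≥0∞) ^ 2 ≤
      ENNReal.ofReal (lam ^ (-(n : ℝ) / 2) * Lam * θ ^ ((1 : ℝ) - n) * r ^ ((1 : ℝ) - n)) *
        ∫⁻ x in Metric.ball x₀ r, (‖gradient u x‖₊ : ℝ≥0∞) ^ 2 := by
  classical
  obtain ⟨hθ0, hθ1⟩ := hθ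
  have hLam : 0 < Lam := lt_of_lt_of_le hlam hlamLam
  have hPSD : A.PosSemidef := hApos.posSemidef
  have hSeq : matrixSqrt A = (hPSD.1.eigenvectorUnitary : Matrix (Fin n) (Fin n) ℝ) *
      Matrix.diagonal ((↑) ∘ (√·) ∘ hPSD.1.eigenvalues) *
      (star hPSD.1.eigenvectorUnitary : Matrix (Fin n) (Fin n) ℝ) := dif_pos hPSD
  set S : Matrix (Fin n) (Fin n) ℝ := matrixSqrt A with hSdef
  have hSpsd : S.PosSemidef := by
    rw [hSeq]
    have hD : (Matrix.diagonal ((↑) ∘ (√·) ∘ hPSD.1.eigenvalues) :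
        Matrix (Fin n) (Fin n) ℝ).PosSemidef :=
      Matrix.PosSemidef.diagonal (fun i => by simp [Real.sqrt_nonneg])
    simpa [Matrix.star_eq_conjTranspose] using
      hD.mul_mul_conjTranspose_same (hPSD.1.eigenvectorUnitary : Matrix (Fin n) (Fin n) ℝ)
  have hSS : S * S = A := by
    rw [hSeq]
    have hu : (star hPSD.1.eigenvectorUnitary : Matrix (Fin n) (Fin n) ℝ) *
        (hPSD.1.eigenvectorUnitary : Matrix (Fin n) (Fin n) ℝ) = 1 :=
      Unitary.coe_star_mul_self _
    have hDD : (Matrix.diagonal ((↑) ∘ (√·) ∘ hPSD.1.eigenvalues) :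
        Matrix (Fin n) (Fin n) ℝ) * Matrix.diagonal ((↑) ∘ (√·) ∘ hPSD.1.eigenvalues)
        = Matrix.diagonal (RCLike.ofReal ∘ hPSD.1.eigenvalues) := by
      rw [Matrix.diagonal_mul_diagonal]
      congr 1
      funext i
      simp [Real.mul_self_sqrt (hPSD.eigenvalues_nonneg i)]
    conv_rhs => rw [hPSD.1.spectral_theorem]
    rw [Unitary.conjStarAlgAut_apply, ← hDD]
    simp only [mul_assoc]
    rw [← mul_assoc (star hPSD.1.eigenvectorUnitary : Matrix (Fin n) (Fin n) ℝ), hu, one_mul]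
  have hSsym : (Matrix.toEuclideanLin S).IsSymmetric :=
    Matrix.isHermitian_iff_isSymmetric.mp hSpsd.1
  have hSSlin : ∀ ξ : EuclideanSpace ℝ (Fin n),
      Matrix.toEuclideanLin A ξ = Matrix.toEuclideanLin S (Matrix.toEuclideanLin S ξ) := by
    intro ξ
    rw [← hSS, Matrix.toEuclideanLin_eq_toLin,
      Matrix.toLin_mul _ (PiLp.basisFun 2 ℝ (Fin n)) _]
    rfl
  -- operator norm type bound for S
  have hSnorm : ∀ ξ : EuclideanSpace ℝ (Fin n),
      ‖Matrix.toEuclideanLin S ξ‖ ≤ Real.sqrt Lam * ‖ξ‖ := by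
    intro ξ
    have h1 : ‖Matrix.toEuclideanLin S ξ‖ ^ 2 ≤ Lam * ‖ξ‖ ^ 2 := by
      calc ‖Matrix.toEuclideanLin S ξ‖ ^ 2
          = ⟪Matrix.toEuclideanLin S ξ, Matrix.toEuclideanLin S ξ⟫ :=
            (real_inner_self_eq_norm_sq _).symm
        _ = ⟪Matrix.toEuclideanLin S (Matrix.toEuclideanLin S ξ), ξ⟫ :=
            (hSsym (Matrix.toEuclideanLin S ξ) ξ).symm
        _ = ⟪Matrix.toEuclideanLin A ξ, ξ⟫ := by rw [hSSlin]
        _ ≤ Lam * ‖ξ‖ ^ 2 := (hAell ξ).2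
    have h2 := Real.sqrt_le_sqrt h1
    rwa [Real.sqrt_sq (norm_nonneg _), Real.sqrt_mul hLam.le,
      Real.sqrt_sq (norm_nonneg _)] at h2
  -- eigenvalue and determinant bounds
  have hA' : A.IsHermitian := hApos.1
  have heig : ∀ i, lam ≤ hA'.eigenvalues i := by
    intro i
    have hv1 : ‖(hA'.eigenvectorBasis i : EuclideanSpace ℝ (Fin n))‖ = 1 :=
      hA'.eigenvectorBasis.orthonormal.1 i
    have h1 : Matrix.toEuclideanLin A (hA'.eigenvectorBasis i)
        = hA'.eigenvalues i • (hA'.eigenvectorBasis i : EuclideanSpace ℝ (Fin n)) := by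
      ext j
      exact congrFun (hA'.mulVec_eigenvectorBasis i) j
    have h2 := (hAell (hA'.eigenvectorBasis i)).1
    rw [h1, real_inner_smul_left, real_inner_self_eq_norm_sq, hv1] at h2
    simpa using h2
  have hdetA : lam ^ n ≤ A.det := by
    have h := hA'.det_eq_prod_eigenvalues
    rw [h]
    push_cast
    calc lam ^ n = ∏ _i : Fin n, lam := by simp
      _ ≤ ∏ i, hA'.eigenvalues i :=
        Finset.prod_le_prod (fun _ _ => hlam.le) (fun i _ => heig i)
  have hdetS0 : (0 : ℝ) ≤ S.det := by
    rw [hSpsd.1.det_eq_prod_eigenvalues]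
    push_cast
    exact Finset.prod_nonneg fun i _ => hSpsd.eigenvalues_nonneg i
  have hdSS : S.det * S.det = A.det := by rw [← Matrix.det_mul, hSS]
  have hlamn : (0 : ℝ) < lam ^ ((n : ℝ) / 2) := Real.rpow_pos_of_pos hlam _
  have hdetS : lam ^ ((n : ℝ) / 2) ≤ S.det := by
    have hsq : lam ^ ((n : ℝ) / 2) * lam ^ ((n : ℝ) / 2) = lam ^ n := by
      rw [← Real.rpow_add hlam, ← Real.rpow_natCast lam n]
      norm_num
    calc lam ^ ((n : ℝ) / 2)
        = Real.sqrt (lam ^ ((n : ℝ) / 2) * lam ^ ((n : ℝ) / 2)) :=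
          (Real.sqrt_mul_self hlamn.le).symm
      _ ≤ Real.sqrt (S.det * S.det) := by
          apply Real.sqrt_le_sqrt
          rw [hsq, hdSS]
          exact hdetA
      _ = S.det := Real.sqrt_mul_self hdetS0
  have hdetSpos : (0 : ℝ) < S.det := lt_of_lt_of_le hlamn hdetS
  -- the affine map T and its derivative
  set SL : EuclideanSpace ℝ (Fin n) →L[ℝ] EuclideanSpace ℝ (Fin n) :=
    LinearMap.toContinuousLinearMap (Matrix.toEuclideanLin S) with hSL
  have hSLapp : ∀ ξ, SL ξ = Matrix.toEuclideanLin S ξ := fun ξ => rfl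
  set T : EuclideanSpace ℝ (Fin n) → EuclideanSpace ℝ (Fin n) :=
    fun z => Matrix.toEuclideanLin S (z - x₀) + x₀ with hT
  have hTeq : T = fun w => SL w + (x₀ - SL x₀) := by
    funext w
    show Matrix.toEuclideanLin S (w - x₀) + x₀ = _
    rw [map_sub, hSLapp, hSLapp]
    abel
  have hT' : ∀ z, HasFDerivAt T SL z := by
    intro z
    rw [hTeq]
    exact SL.hasFDerivAt.add_const _
  -- T is injective
  have hker : ∀ ξ : EuclideanSpace ℝ (Fin n), Matrix.toEuclideanLin S ξ = 0 → ξ = 0 := by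
    intro ξ h
    have h2 := (hAell ξ).1
    rw [hSSlin ξ, h, map_zero] at h2
    simp only [inner_zero_left] at h2
    by_contra hne
    have hpos : 0 < ‖ξ‖ := norm_pos_iff.mpr hne
    nlinarith [mul_pos hlam (pow_pos hpos 2)]
  have hTinj : Function.Injective T := by
    intro a b hab
    have h1 : Matrix.toEuclideanLin S (a - x₀) = Matrix.toEuclideanLin S (b - x₀) :=
      add_right_cancel hab
    have h2 : Matrix.toEuclideanLin S (a - b) = 0 := by
      have hab' : a - b = (a - x₀) - (b - x₀) := by abel
      rw [hab', map_sub, h1, sub_self]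
    exact sub_eq_zero.mp (hker _ h2)
  -- determinant of SL
  have hdetSL : SL.det = S.det := by
    have : (SL : EuclideanSpace ℝ (Fin n) →ₗ[ℝ] EuclideanSpace ℝ (Fin n))
        = Matrix.toEuclideanLin S := LinearMap.coe_toContinuousLinearMap _
    rw [ContinuousLinearMap.det, this, Matrix.toEuclideanLin_eq_toLin]
    exact LinearMap.det_toLin _ _
  -- T maps the small ball into the big ball
  have hsΛ : 0 < Real.sqrt Lam := Real.sqrt_pos.mpr hLam
  have hTmaps : ∀ y ∈ Metric.ball x₀ (θ * r), T y ∈ Metric.ball x₀ r := by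
    intro y hy
    rw [Metric.mem_ball] at hy ⊢
    have h1 : dist (T y) x₀ = ‖Matrix.toEuclideanLin S (y - x₀)‖ := by
      rw [hT]
      simp [dist_eq_norm]
    rw [h1]
    have h2 : ‖Matrix.toEuclideanLin S (y - x₀)‖ ≤ Real.sqrt Lam * ‖y - x₀‖ := hSnorm _
    have h3 : ‖y - x₀‖ < θ * r := by rwa [← dist_eq_norm]
    have h4 : Real.sqrt Lam * θ ≤ 1 := by
      have := mul_le_mul_of_nonneg_left hθ1 hsΛ.le
      rwa [mul_inv_cancel₀ hsΛ.ne'] at this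
    calc ‖Matrix.toEuclideanLin S (y - x₀)‖
        ≤ Real.sqrt Lam * ‖y - x₀‖ := h2
      _ < Real.sqrt Lam * (θ * r) := by
          exact mul_lt_mul_of_pos_left h3 hsΛ
      _ = (Real.sqrt Lam * θ) * r := by ring
      _ ≤ 1 * r := mul_le_mul_of_nonneg_right h4 hr.le
      _ = r := one_mul r
  -- gradient chain rule on the small ball
  have hgrad : ∀ y ∈ Metric.ball x₀ (θ * r),
      gradient (fun z => u (Matrix.toEuclideanLin S (z - x₀) + x₀)) y
        = Matrix.toEuclideanLin S (gradient u (T y)) := by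
    intro y hy
    have hmem := hTmaps y hy
    have hd : DifferentiableAt ℝ u (T y) :=
      ((hu.differentiableOn one_ne_zero) _ hmem).differentiableAt
        (Metric.isOpen_ball.mem_nhds hmem)
    have hgu : HasFDerivAt u
        (InnerProductSpace.toDual ℝ (EuclideanSpace ℝ (Fin n)) (gradient u (T y))) (T y) :=
      hd.hasGradientAt.hasFDerivAt
    have hcomp : HasFDerivAt (fun z => u (T z))
        ((InnerProductSpace.toDual ℝ (EuclideanSpace ℝ (Fin n))
          (gradient u (T y))).comp SL) y :=
      hgu.comp y (hT' y)
    have heq : (InnerProductSpace.toDual ℝ (EuclideanSpace ℝ (Fin n))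
          (gradient u (T y))).comp SL
        = InnerProductSpace.toDual ℝ (EuclideanSpace ℝ (Fin n))
            (Matrix.toEuclideanLin S (gradient u (T y))) := by
      ext ξ
      simp only [ContinuousLinearMap.comp_apply, InnerProductSpace.toDual_apply_apply, hSLapp]
      exact (hSsym (gradient u (T y)) ξ).symm
    rw [heq] at hcomp
    have hga : HasGradientAt (fun z => u (T z))
        (Matrix.toEuclideanLin S (gradient u (T y))) y :=
      hasGradientAt_iff_hasFDerivAt.mpr hcomp
    have hfun : (fun z => u (Matrix.toEuclideanLin S (z - x₀) + x₀)) = fun z => u (T z) := by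
      funext z; rw [hT]
    rw [hfun]
    exact hga.gradient
  -- measurability
  have hgm : Measurable fun x : EuclideanSpace ℝ (Fin n) =>
      ((‖gradient u x‖₊ : ℝ≥0∞)) ^ 2 := by
    have h1 : Measurable (gradient u) :=
      ((InnerProductSpace.toDual ℝ
        (EuclideanSpace ℝ (Fin n))).symm.continuous.measurable).comp (measurable_fderiv ℝ u)
    exact (h1.nnnorm.coe_nnreal_ennreal).pow_const 2
  have hTcont : Continuous T := by
    rw [hTeq]
    exact SL.continuous.add continuous_const
  -- change of variables
  set g : EuclideanSpace ℝ (Fin n) → ℝ≥0∞ :=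
    fun x => ((‖gradient u x‖₊ : ℝ≥0∞)) ^ 2 with hg
  have hCOV := lintegral_image_eq_lintegral_abs_det_fderiv_mul (volume)
    (measurableSet_ball (x := x₀) (ε := θ * r))
    (f' := fun _ => SL) (fun y _ => (hT' y).hasFDerivWithinAt) hTinj.injOn g
  have habs : |SL.det| = S.det := by rw [hdetSL, abs_of_pos hdetSpos]
  have hCOV2 : ENNReal.ofReal S.det * ∫⁻ y in Metric.ball x₀ (θ * r), g (T y)
      = ∫⁻ x in T '' Metric.ball x₀ (θ * r), g x := by
    rw [hCOV]
    rw [← lintegral_const_mul' (ENNReal.ofReal S.det) _ ENNReal.ofReal_ne_top]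
    congr 1
    funext y
    rw [habs]
  -- the image is inside the big ball
  have hsub : T '' Metric.ball x₀ (θ * r) ⊆ Metric.ball x₀ r := by
    rintro x ⟨y, hy, rfl⟩
    exact hTmaps y hy
  have hI2 : ∫⁻ y in Metric.ball x₀ (θ * r), g (T y)
      ≤ (ENNReal.ofReal S.det)⁻¹ * ∫⁻ x in Metric.ball x₀ r, g x := by
    have hne0 : ENNReal.ofReal S.det ≠ 0 := by
      simp [ENNReal.ofReal_eq_zero, not_le, hdetSpos]
    have h1 : ∫⁻ y in Metric.ball x₀ (θ * r), g (T y)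
        = (ENNReal.ofReal S.det)⁻¹ *
          (ENNReal.ofReal S.det * ∫⁻ y in Metric.ball x₀ (θ * r), g (T y)) := by
      rw [← mul_assoc, ENNReal.inv_mul_cancel hne0 ENNReal.ofReal_ne_top, one_mul]
    rw [h1, hCOV2]
    exact mul_le_mul_right (lintegral_mono_set hsub) _
  -- pointwise bound on the small ball
  have hptwise : ∫⁻ y in Metric.ball x₀ (θ * r),
      (‖gradient (fun z => u (Matrix.toEuclideanLin S (z - x₀) + x₀)) y‖₊ : ℝ≥0∞) ^ 2
      ≤ ENNReal.ofReal Lam * ∫⁻ y in Metric.ball x₀ (θ * r), g (T y) := by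
    rw [← lintegral_const_mul' _ _ ENNReal.ofReal_ne_top]
    apply setLIntegral_mono ((hgm.comp hTcont.measurable).const_mul _)
    intro y hy
    rw [hgrad y hy]
    show ((‖Matrix.toEuclideanLin S (gradient u (T y))‖₊ : ℝ≥0∞)) ^ 2
      ≤ ENNReal.ofReal Lam * ((‖gradient u (T y)‖₊ : ℝ≥0∞)) ^ 2
    generalize gradient u (T y) = w
    have key : ∀ v : EuclideanSpace ℝ (Fin n),
        ((‖v‖₊ : ℝ≥0∞)) ^ 2 = ENNReal.ofReal (‖v‖ ^ 2) := by
      intro v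
      rw [ENNReal.ofReal_pow (norm_nonneg v), ← coe_nnnorm, ENNReal.ofReal_coe_nnreal]
    have hreal : ‖Matrix.toEuclideanLin S w‖ ^ 2 ≤ Lam * ‖w‖ ^ 2 := by
      have h1 := hSnorm w
      have h2 : (Real.sqrt Lam * ‖w‖) ^ 2 = Lam * ‖w‖ ^ 2 := by
        rw [mul_pow, Real.sq_sqrt hLam.le]
      nlinarith [norm_nonneg (Matrix.toEuclideanLin S w),
        norm_nonneg w, Real.sqrt_nonneg Lam]
    rw [key, key, ← ENNReal.ofReal_mul hLam.le]
    exact ENNReal.ofReal_le_ofReal hreal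
  -- put everything together
  have hJ := hI2
  calc ENNReal.ofReal ((θ * r) ^ ((1 : ℝ) - n)) *
        ∫⁻ y in Metric.ball x₀ (θ * r),
          (‖gradient (fun z => u (Matrix.toEuclideanLin S (z - x₀) + x₀)) y‖₊ : ℝ≥0∞) ^ 2
      ≤ ENNReal.ofReal ((θ * r) ^ ((1 : ℝ) - n)) *
          (ENNReal.ofReal Lam *
            ((ENNReal.ofReal S.det)⁻¹ * ∫⁻ x in Metric.ball x₀ r, g x)) := by
        apply mul_le_mul_right
        exact le_trans hptwise (mul_le_mul_right hJ _)
    _ = (ENNReal.ofReal ((θ * r) ^ ((1 : ℝ) - n)) * ENNReal.ofReal Lam *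
          (ENNReal.ofReal S.det)⁻¹) * ∫⁻ x in Metric.ball x₀ r, g x := by ring
    _ ≤ ENNReal.ofReal (lam ^ (-(n : ℝ) / 2) * Lam * θ ^ ((1 : ℝ) - n) * r ^ ((1 : ℝ) - n)) *
          ∫⁻ x in Metric.ball x₀ r, g x := by
        apply mul_le_mul_left
        rw [← ENNReal.ofReal_inv_of_pos hdetSpos, ← ENNReal.ofReal_mul (by positivity),
          ← ENNReal.ofReal_mul (by positivity)]
        apply ENNReal.ofReal_le_ofReal
        have hmr : (θ * r) ^ ((1 : ℝ) - n) = θ ^ ((1 : ℝ) - n) * r ^ ((1 : ℝ) - n) :=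
          Real.mul_rpow hθ0.le hr.le
        have hinv : (S.det)⁻¹ ≤ lam ^ (-(n : ℝ) / 2) := by
          have h1 : lam ^ (-(n : ℝ) / 2) = (lam ^ ((n : ℝ) / 2))⁻¹ := by
            rw [neg_div, Real.rpow_neg hlam.le]
          rw [h1]
          exact inv_anti₀ hlamn hdetS
        calc (θ * r) ^ ((1 : ℝ) - n) * Lam * (S.det)⁻¹
            = (Lam * θ ^ ((1 : ℝ) - n) * r ^ ((1 : ℝ) - n)) * (S.det)⁻¹ := by
              rw [hmr]; ring
          _ ≤ (Lam * θ ^ ((1 : ℝ) - n) * r ^ ((1 : ℝ) - n)) * lam ^ (-(n : ℝ) / 2) := by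
              apply mul_le_mul_of_nonneg_left hinv
              positivity
          _ = lam ^ (-(n : ℝ) / 2) * Lam * θ ^ ((1 : ℝ) - n) * r ^ ((1 : ℝ) - n) := by ring
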